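/- arXiv:2311.08220 — 2 statements merged into one kernel-verified Lean document; each statement's English description precedes it below -/
import Mathlib

section
/- For finite-valued random variables U, S, V, X, Y with joint law factorizing as Q_V(v)·Q_S(s)·Q_{U|S,V}(u|s,v)·Q_{X|U,V}(x|u,v)·Q_{Y|X,S}(y|x,s) where Y = X ⊕ S almost surely (values in Z_A), one has I(U; Y | V) − I(U; S | V) ≤ log A − H(S). -/
open Finset

/-- Probability of the event `X = x` under the pmf `p` on a finite sample space. -/
noncomputable def pr {Ω : Type*} [Fintype Ω] {α : Type*} [DecidableEq α]
    (p : Ω → ℝ) (X : Ω → α) (x : α) : ℝ :=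
  ∑ ω : Ω, if X ω = x then p ω else 0

/-- `p` is a probability mass function on the finite sample space `Ω`. -/
def IsPMF {Ω : Type*} [Fintype Ω] (p : Ω → ℝ) : Prop :=
  (∀ ω, 0 ≤ p ω) ∧ ∑ ω : Ω, p ω = 1

/-- Shannon entropy (natural log) of the random variable `X`. -/
noncomputable def ent {Ω : Type*} [Fintype Ω] {α : Type*} [Fintype α] [DecidableEq α]
    (p : Ω → ℝ) (X : Ω → α) : ℝ :=
  -∑ x : α, pr p X x * Real.log (pr p X x)

/-- Mutual information `I(X;Y) = H(X) + H(Y) - H(X,Y)`. -/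
noncomputable def mi {Ω : Type*} [Fintype Ω] {α β : Type*} [Fintype α] [DecidableEq α]
    [Fintype β] [DecidableEq β] (p : Ω → ℝ) (X : Ω → α) (Y : Ω → β) : ℝ :=
  ent p X + ent p Y - ent p (fun ω => (X ω, Y ω))

/-- Conditional entropy `H(X|Z) = H(X,Z) - H(Z)`. -/
noncomputable def cent {Ω : Type*} [Fintype Ω] {α γ : Type*} [Fintype α] [DecidableEq α]
    [Fintype γ] [DecidableEq γ] (p : Ω → ℝ) (X : Ω → α) (Z : Ω → γ) : ℝ :=
  ent p (fun ω => (X ω, Z ω)) - ent p Z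

/-- Conditional mutual information `I(X;Y|Z) = H(X|Z) + H(Y|Z) - H(X,Y|Z)`. -/
noncomputable def cmi {Ω : Type*} [Fintype Ω] {α β γ : Type*} [Fintype α] [DecidableEq α]
    [Fintype β] [DecidableEq β] [Fintype γ] [DecidableEq γ]
    (p : Ω → ℝ) (X : Ω → α) (Y : Ω → β) (Z : Ω → γ) : ℝ :=
  cent p X Z + cent p Y Z - cent p (fun ω => (X ω, Y ω)) Z

/-- `X` and `Y` are independent under `p`. -/
def IndepRV {Ω : Type*} [Fintype Ω] {α β : Type*} [DecidableEq α] [DecidableEq β]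
    (p : Ω → ℝ) (X : Ω → α) (Y : Ω → β) : Prop :=
  ∀ x y, pr p (fun ω => (X ω, Y ω)) (x, y) = pr p X x * pr p Y y

set_option maxHeartbeats 1000000
section AuxLemmas
section Basic
variable {Ω : Type*} [Fintype Ω] {α β : Type*} [DecidableEq α] (p : Ω → ℝ)

lemma pr_nonneg (hp : ∀ ω, 0 ≤ p ω) (X : Ω → α) (x : α) : 0 ≤ pr p X x := by
  apply Finset.sum_nonneg; intro ω _; split_ifs <;> simp [hp ω]

lemma sum_pr [Fintype α] (X : Ω → α) : ∑ x : α, pr p X x = ∑ ω : Ω, p ω := by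
  unfold pr
  rw [Finset.sum_comm]
  exact Finset.sum_congr rfl fun ω _ => by simp

lemma pr_comp {τ : Type*} [Fintype τ] [DecidableEq τ] (T : Ω → τ) (g : τ → α) (a : α) :
    pr p (fun ω => g (T ω)) a = ∑ t : τ, if g t = a then pr p T t else 0 := by
  unfold pr
  have h1 : ∀ t : τ, (if g t = a then ∑ ω : Ω, if T ω = t then p ω else 0 else 0)
      = ∑ ω : Ω, if T ω = t then (if g t = a then p ω else 0) else 0 := by
    intro t; split_ifs with h
    · rfl
    · simp
  simp only [h1]
  rw [Finset.sum_comm]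
  refine Finset.sum_congr rfl fun ω _ => ?_
  rw [Finset.sum_eq_single (T ω)]
  · simp
  · intro t _ ht; simp [Ne.symm ht]
  · simp

lemma pr_ge (hp : ∀ ω, 0 ≤ p ω) (X : Ω → α) (ω : Ω) : p ω ≤ pr p X (X ω) := by
  unfold pr
  refine Finset.single_le_sum (f := fun ω' => if X ω' = X ω then p ω' else 0) ?_ (mem_univ ω) |>.trans_eq' (by simp)
  intro ω' _; split_ifs <;> simp [hp ω']

lemma pr_congr_ae {g h : Ω → α} (hgh : ∀ ω, p ω ≠ 0 → g ω = h ω) : pr p g = pr p h := by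
  funext x
  refine Finset.sum_congr rfl fun ω _ => ?_
  by_cases hω : p ω = 0
  · simp [hω]
  · rw [hgh ω hω]

end Basic

lemma gibbs_pt {a b : ℝ} (ha : 0 ≤ a) (hb : 0 ≤ b) (h : b = 0 → a = 0) :
    a * Real.log b - a * Real.log a ≤ b - a := by
  rcases eq_or_lt_of_le ha with h0 | h0
  · simp [← h0, hb]
  · have hb0 : 0 < b := by
      rcases eq_or_lt_of_le hb with h1 | h1
      · exact absurd (h h1.symm) (by linarith)
      · exact h1
    have := Real.log_le_sub_one_of_pos (show 0 < b / a by positivity)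
    rw [Real.log_div (ne_of_gt hb0) (ne_of_gt h0)] at this
    have h2 : a * (Real.log b - Real.log a) ≤ a * (b / a - 1) :=
      mul_le_mul_of_nonneg_left this ha
    have h3 : a * (b / a - 1) = b - a := by field_simp
    nlinarith

section Ent
variable {Ω : Type*} [Fintype Ω] {α β γ : Type*}
  [Fintype α] [DecidableEq α] [Fintype β] [DecidableEq β] [Fintype γ] [DecidableEq γ]
  (p : Ω → ℝ) (X : Ω → α) (Y : Ω → β) (Z : Ω → γ)

lemma ent_congr_ae {g h : Ω → α} (hgh : ∀ ω, p ω ≠ 0 → g ω = h ω) : ent p g = ent p h := by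
  unfold ent; rw [pr_congr_ae p hgh]

lemma ent_comp_inj {f : α → β} (hf : Function.Injective f) (W : Ω → α) :
    ent p (fun ω => f (W ω)) = ent p W := by
  have key : ∀ a : α, pr p (fun ω => f (W ω)) (f a) = pr p W a := by
    intro a
    refine Finset.sum_congr rfl fun ω _ => ?_
    simp [hf.eq_iff]
  have key2 : ∀ b : β, b ∉ Finset.image f Finset.univ → pr p (fun ω => f (W ω)) b = 0 := by
    intro b hb
    apply Finset.sum_eq_zero
    intro ω _
    have : f (W ω) ≠ b := fun h => hb (by simp [← h])
    simp [this]
  unfold ent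
  congr 1
  rw [← Finset.sum_subset (Finset.subset_univ (Finset.image f Finset.univ))]
  · rw [Finset.sum_image (fun a _ a' _ h => hf h)]
    exact Finset.sum_congr rfl fun a _ => by rw [key]
  · intro b _ hb; rw [key2 b hb]; simp

-- marginalization lemmas for the flat triple
lemma pr_m1 (x : α) (z : γ) :
    pr p (fun ω => (X ω, Z ω)) (x, z) = ∑ y : β, pr p (fun ω => (X ω, Y ω, Z ω)) (x, y, z) := by
  rw [show (fun ω => (X ω, Z ω)) = (fun ω => ((fun t : α × β × γ => (t.1, t.2.2)) ((fun ω => (X ω, Y ω, Z ω)) ω))) from rfl,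
    pr_comp p (fun ω => (X ω, Y ω, Z ω)) (fun t : α × β × γ => (t.1, t.2.2)) (x, z)]
  rw [Fintype.sum_prod_type]
  rw [Finset.sum_eq_single x]
  · rw [Fintype.sum_prod_type]
    refine Finset.sum_congr rfl fun y _ => ?_
    rw [Finset.sum_eq_single z] <;> simp +contextual [Prod.ext_iff, eq_comm]
  · intro a _ ha
    apply Finset.sum_eq_zero; intro t _
    simp [Prod.ext_iff, ha]
  · simp

lemma pr_m2 (y : β) (z : γ) :
    pr p (fun ω => (Y ω, Z ω)) (y, z) = ∑ x : α, pr p (fun ω => (X ω, Y ω, Z ω)) (x, y, z) := by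
  rw [show (fun ω => (Y ω, Z ω)) = (fun ω => ((fun t : α × β × γ => (t.2.1, t.2.2)) ((fun ω => (X ω, Y ω, Z ω)) ω))) from rfl,
    pr_comp p (fun ω => (X ω, Y ω, Z ω)) (fun t : α × β × γ => (t.2.1, t.2.2)) (y, z)]
  rw [Fintype.sum_prod_type]
  refine Finset.sum_congr rfl fun x _ => ?_
  rw [Fintype.sum_prod_type]
  rw [Finset.sum_eq_single y]
  · rw [Finset.sum_eq_single z] <;> simp +contextual [Prod.ext_iff, eq_comm]
  · intro b _ hb
    apply Finset.sum_eq_zero; intro t _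
    simp [Prod.ext_iff, hb]
  · simp

lemma pr_m3 (z : γ) :
    pr p Z z = ∑ x : α, ∑ y : β, pr p (fun ω => (X ω, Y ω, Z ω)) (x, y, z) := by
  rw [show Z = (fun ω => ((fun t : α × β × γ => t.2.2) ((fun ω => (X ω, Y ω, Z ω)) ω))) from rfl,
    pr_comp p (fun ω => (X ω, Y ω, Z ω)) (fun t : α × β × γ => t.2.2) z]
  rw [Fintype.sum_prod_type]
  refine Finset.sum_congr rfl fun x _ => ?_
  rw [Fintype.sum_prod_type]
  refine Finset.sum_congr rfl fun y _ => ?_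
  rw [Finset.sum_eq_single z] <;> simp +contextual [eq_comm]

end Ent

section Core
variable {α β γ : Type*} [Fintype α] [DecidableEq α] [Fintype β] [DecidableEq β]
  [Fintype γ] [DecidableEq γ]

lemma triple_reorder (f : α → β → γ → ℝ) :
    ∑ x : α, ∑ y : β, ∑ z : γ, f x y z = ∑ z : γ, ∑ x : α, ∑ y : β, f x y z := by
  calc ∑ x : α, ∑ y : β, ∑ z : γ, f x y z
      = ∑ x : α, ∑ z : γ, ∑ y : β, f x y z :=
        Finset.sum_congr rfl fun _ _ => Finset.sum_comm
    _ = ∑ z : γ, ∑ x : α, ∑ y : β, f x y z := Finset.sum_comm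

lemma core_ineq (J : α → β → γ → ℝ) (hJ : ∀ x y z, 0 ≤ J x y z) :
    0 ≤ ∑ x : α, ∑ y : β, ∑ z : γ,
      (J x y z * Real.log (J x y z)
        + J x y z * Real.log (∑ x' : α, ∑ y' : β, J x' y' z)
        - J x y z * Real.log (∑ y' : β, J x y' z)
        - J x y z * Real.log (∑ x' : α, J x' y z)) := by
  set m1 : α → γ → ℝ := fun x z => ∑ y' : β, J x y' z with hm1
  set m2 : β → γ → ℝ := fun y z => ∑ x' : α, J x' y z with hm2
  set m3 : γ → ℝ := fun z => ∑ x' : α, ∑ y' : β, J x' y' z with hm3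
  have hm1nn : ∀ x z, 0 ≤ m1 x z := fun x z => Finset.sum_nonneg fun _ _ => hJ _ _ _
  have hm2nn : ∀ y z, 0 ≤ m2 y z := fun y z => Finset.sum_nonneg fun _ _ => hJ _ _ _
  have hm3nn : ∀ z, 0 ≤ m3 z := fun z =>
    Finset.sum_nonneg fun _ _ => Finset.sum_nonneg fun _ _ => hJ _ _ _
  have hJm1 : ∀ x y z, J x y z ≤ m1 x z := fun x y z =>
    Finset.single_le_sum (fun y' _ => hJ x y' z) (Finset.mem_univ y)
  have hJm2 : ∀ x y z, J x y z ≤ m2 y z := fun x y z =>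
    Finset.single_le_sum (fun x' _ => hJ x' y z) (Finset.mem_univ x)
  have hm1m3 : ∀ x z, m1 x z ≤ m3 z := fun x z =>
    Finset.single_le_sum (fun x' _ => hm1nn x' z) (Finset.mem_univ x)
  have hJm3 : ∀ x y z, J x y z ≤ m3 z := fun x y z => (hJm1 x y z).trans (hm1m3 x z)
  show 0 ≤ ∑ x : α, ∑ y : β, ∑ z : γ,
      (J x y z * Real.log (J x y z) + J x y z * Real.log (m3 z)
        - J x y z * Real.log (m1 x z) - J x y z * Real.log (m2 y z))
  set b : α → β → γ → ℝ := fun x y z => if m3 z = 0 then 0 else m1 x z * m2 y z / m3 z with hb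
  have hbnn : ∀ x y z, 0 ≤ b x y z := by
    intro x y z; rw [hb]; dsimp only; split_ifs with h
    · exact le_refl 0
    · have h1 := hm1nn x z; have h2 := hm2nn y z
      have h3 : 0 < m3 z := lt_of_le_of_ne (hm3nn z) (Ne.symm h)
      positivity
  have key : ∀ x y z,
      J x y z * Real.log (m1 x z) + J x y z * Real.log (m2 y z)
        - J x y z * Real.log (m3 z) - J x y z * Real.log (J x y z)
        ≤ b x y z - J x y z := by
    intro x y z
    rcases eq_or_lt_of_le (hJ x y z) with h0 | h0
    · rw [← h0]; simpa using hbnn x y z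
    · have hm3pos : 0 < m3 z := lt_of_lt_of_le h0 (hJm3 x y z)
      have hm1pos : 0 < m1 x z := lt_of_lt_of_le h0 (hJm1 x y z)
      have hm2pos : 0 < m2 y z := lt_of_lt_of_le h0 (hJm2 x y z)
      have hbval : b x y z = m1 x z * m2 y z / m3 z := by
        rw [hb]; dsimp only; rw [if_neg (ne_of_gt hm3pos)]
      have hlog : Real.log (m1 x z * m2 y z / m3 z)
          = Real.log (m1 x z) + Real.log (m2 y z) - Real.log (m3 z) := by
        rw [Real.log_div (by positivity) (ne_of_gt hm3pos),
          Real.log_mul (ne_of_gt hm1pos) (ne_of_gt hm2pos)]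
      have := gibbs_pt (le_of_lt h0) (show (0:ℝ) ≤ m1 x z * m2 y z / m3 z by positivity)
        (fun h => absurd h (by positivity))
      rw [hlog] at this
      rw [hbval]
      nlinarith
  have sumb : ∑ x : α, ∑ y : β, ∑ z : γ, b x y z ≤ ∑ x : α, ∑ y : β, ∑ z : γ, J x y z := by
    rw [triple_reorder b, triple_reorder J]
    refine Finset.sum_le_sum fun z _ => ?_
    by_cases h : m3 z = 0
    · have : ∀ x y, b x y z = 0 := by intro x y; rw [hb]; simp [h]
      simp only [this, Finset.sum_const_zero]
      exact hm3nn z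
    · have : ∑ x : α, ∑ y : β, b x y z = m3 z := by
        have hbv : ∀ x y, b x y z = m1 x z * m2 y z / m3 z := by
          intro x y; rw [hb]; dsimp only; rw [if_neg h]
        simp only [hbv]
        have : ∑ x : α, ∑ y : β, m1 x z * m2 y z / m3 z
            = (∑ x : α, m1 x z) * (∑ y : β, m2 y z) / m3 z := by
          rw [Finset.sum_mul_sum, Finset.sum_div]
          exact Finset.sum_congr rfl fun x _ => by rw [Finset.sum_div]
        rw [this]
        have e1 : ∑ x : α, m1 x z = m3 z := rfl
        have e2 : ∑ y : β, m2 y z = m3 z := Finset.sum_comm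
        rw [e1, e2]
        field_simp
      rw [this]
  have main : ∑ x : α, ∑ y : β, ∑ z : γ,
      (J x y z * Real.log (m1 x z) + J x y z * Real.log (m2 y z)
        - J x y z * Real.log (m3 z) - J x y z * Real.log (J x y z))
      ≤ ∑ x : α, ∑ y : β, ∑ z : γ, (b x y z - J x y z) := by
    refine Finset.sum_le_sum fun x _ => Finset.sum_le_sum fun y _ => Finset.sum_le_sum fun z _ => key x y z
  have split : ∑ x : α, ∑ y : β, ∑ z : γ, (b x y z - J x y z)
      = (∑ x : α, ∑ y : β, ∑ z : γ, b x y z) - ∑ x : α, ∑ y : β, ∑ z : γ, J x y z := by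
    simp [Finset.sum_sub_distrib]
  have neg : ∑ x : α, ∑ y : β, ∑ z : γ,
      (J x y z * Real.log (J x y z) + J x y z * Real.log (m3 z)
        - J x y z * Real.log (m1 x z) - J x y z * Real.log (m2 y z))
      = -∑ x : α, ∑ y : β, ∑ z : γ,
      (J x y z * Real.log (m1 x z) + J x y z * Real.log (m2 y z)
        - J x y z * Real.log (m3 z) - J x y z * Real.log (J x y z)) := by
    rw [← Finset.sum_neg_distrib]
    refine Finset.sum_congr rfl fun x _ => ?_
    rw [← Finset.sum_neg_distrib]
    refine Finset.sum_congr rfl fun y _ => ?_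
    rw [← Finset.sum_neg_distrib]
    refine Finset.sum_congr rfl fun z _ => by ring
  rw [neg]
  rw [split] at main
  linarith

lemma core_eq (J : α → β → γ → ℝ) (hJ : ∀ x y z, 0 ≤ J x y z)
    (hci : ∀ x y z, J x y z * (∑ x' : α, ∑ y' : β, J x' y' z)
      = (∑ y' : β, J x y' z) * (∑ x' : α, J x' y z)) :
    ∑ x : α, ∑ y : β, ∑ z : γ,
      (J x y z * Real.log (J x y z)
        + J x y z * Real.log (∑ x' : α, ∑ y' : β, J x' y' z)
        - J x y z * Real.log (∑ y' : β, J x y' z)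
        - J x y z * Real.log (∑ x' : α, J x' y z)) = 0 := by
  refine Finset.sum_eq_zero fun x _ => Finset.sum_eq_zero fun y _ => Finset.sum_eq_zero fun z _ => ?_
  set m1 := ∑ y' : β, J x y' z with hm1
  set m2 := ∑ x' : α, J x' y z with hm2
  set m3 := ∑ x' : α, ∑ y' : β, J x' y' z with hm3
  rcases eq_or_lt_of_le (hJ x y z) with h0 | h0
  · rw [← h0]; ring
  · have hJm1 : J x y z ≤ m1 := Finset.single_le_sum (fun y' _ => hJ x y' z) (Finset.mem_univ y)
    have hm1pos : 0 < m1 := lt_of_lt_of_le h0 hJm1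
    have hm3pos : 0 < m3 := by
      refine lt_of_lt_of_le hm1pos ?_
      exact Finset.single_le_sum (fun x' _ => Finset.sum_nonneg fun y' _ => hJ x' y' z) (Finset.mem_univ x)
    have hm2pos : 0 < m2 := by
      by_contra h
      push_neg at h
      have : m2 = 0 := le_antisymm h (Finset.sum_nonneg fun x' _ => hJ x' y z)
      have := hci x y z
      rw [this] at *
      nlinarith [hci x y z]
    have : Real.log (J x y z) + Real.log m3 = Real.log m1 + Real.log m2 := by
      rw [← Real.log_mul (ne_of_gt h0) (ne_of_gt hm3pos),
        ← Real.log_mul (ne_of_gt hm1pos) (ne_of_gt hm2pos), hci x y z]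
    nlinarith [this]

end Core

section Bridge
variable {Ω : Type*} [Fintype Ω] {α β γ : Type*}
  [Fintype α] [DecidableEq α] [Fintype β] [DecidableEq β] [Fintype γ] [DecidableEq γ]
  (p : Ω → ℝ)

lemma pr_snd' (Y : Ω → β) (Z : Ω → γ) (z : γ) :
    pr p Z z = ∑ y : β, pr p (fun ω => (Y ω, Z ω)) (y, z) := by
  rw [show Z = (fun ω => ((fun t : β × γ => t.2) ((fun ω => (Y ω, Z ω)) ω))) from rfl,
    pr_comp p (fun ω => (Y ω, Z ω)) (fun t : β × γ => t.2) z]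
  rw [Fintype.sum_prod_type]
  refine Finset.sum_congr rfl fun y _ => ?_
  rw [Finset.sum_eq_single z] <;> simp +contextual [eq_comm]

lemma ent_combo (X : Ω → α) (Y : Ω → β) (Z : Ω → γ) :
    ent p (fun ω => (X ω, Z ω)) + ent p (fun ω => (Y ω, Z ω))
      - ent p (fun ω => (X ω, Y ω, Z ω)) - ent p Z
    = ∑ x : α, ∑ y : β, ∑ z : γ,
      (pr p (fun ω => (X ω, Y ω, Z ω)) (x, y, z) * Real.log (pr p (fun ω => (X ω, Y ω, Z ω)) (x, y, z))
        + pr p (fun ω => (X ω, Y ω, Z ω)) (x, y, z) * Real.log (∑ x' : α, ∑ y' : β, pr p (fun ω => (X ω, Y ω, Z ω)) (x', y', z))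
        - pr p (fun ω => (X ω, Y ω, Z ω)) (x, y, z) * Real.log (∑ y' : β, pr p (fun ω => (X ω, Y ω, Z ω)) (x, y', z))
        - pr p (fun ω => (X ω, Y ω, Z ω)) (x, y, z) * Real.log (∑ x' : α, pr p (fun ω => (X ω, Y ω, Z ω)) (x', y, z))) := by
  have e3 : ent p (fun ω => (X ω, Y ω, Z ω)) = -∑ x : α, ∑ y : β, ∑ z : γ,
      pr p (fun ω => (X ω, Y ω, Z ω)) (x, y, z) * Real.log (pr p (fun ω => (X ω, Y ω, Z ω)) (x, y, z)) := by
    unfold ent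
    rw [Fintype.sum_prod_type]
    congr 1
    refine Finset.sum_congr rfl fun x _ => ?_
    rw [Fintype.sum_prod_type]
  have e1 : ent p (fun ω => (X ω, Z ω)) = -∑ x : α, ∑ y : β, ∑ z : γ,
      pr p (fun ω => (X ω, Y ω, Z ω)) (x, y, z)
        * Real.log (∑ y' : β, pr p (fun ω => (X ω, Y ω, Z ω)) (x, y', z)) := by
    unfold ent
    rw [Fintype.sum_prod_type]
    congr 1
    refine Finset.sum_congr rfl fun x _ => ?_
    rw [show (∑ y : β, ∑ z : γ, pr p (fun ω => (X ω, Y ω, Z ω)) (x, y, z)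
        * Real.log (∑ y' : β, pr p (fun ω => (X ω, Y ω, Z ω)) (x, y', z)))
      = ∑ z : γ, ∑ y : β, pr p (fun ω => (X ω, Y ω, Z ω)) (x, y, z)
        * Real.log (∑ y' : β, pr p (fun ω => (X ω, Y ω, Z ω)) (x, y', z)) from Finset.sum_comm]
    refine Finset.sum_congr rfl fun z _ => ?_
    rw [pr_m1 p X Y Z x z, Finset.sum_mul]
  have e2 : ent p (fun ω => (Y ω, Z ω)) = -∑ x : α, ∑ y : β, ∑ z : γ,
      pr p (fun ω => (X ω, Y ω, Z ω)) (x, y, z)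
        * Real.log (∑ x' : α, pr p (fun ω => (X ω, Y ω, Z ω)) (x', y, z)) := by
    unfold ent
    rw [Fintype.sum_prod_type]
    rw [show (∑ x : α, ∑ y : β, ∑ z : γ, pr p (fun ω => (X ω, Y ω, Z ω)) (x, y, z)
        * Real.log (∑ x' : α, pr p (fun ω => (X ω, Y ω, Z ω)) (x', y, z)))
      = ∑ y : β, ∑ z : γ, ∑ x : α, pr p (fun ω => (X ω, Y ω, Z ω)) (x, y, z)
        * Real.log (∑ x' : α, pr p (fun ω => (X ω, Y ω, Z ω)) (x', y, z)) from by
        rw [Finset.sum_comm]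
        exact Finset.sum_congr rfl fun y _ => Finset.sum_comm]
    congr 1
    refine Finset.sum_congr rfl fun y _ => Finset.sum_congr rfl fun z _ => ?_
    rw [pr_m2 p X Y Z y z, Finset.sum_mul]
  have e4 : ent p Z = -∑ x : α, ∑ y : β, ∑ z : γ,
      pr p (fun ω => (X ω, Y ω, Z ω)) (x, y, z)
        * Real.log (∑ x' : α, ∑ y' : β, pr p (fun ω => (X ω, Y ω, Z ω)) (x', y', z)) := by
    unfold ent
    rw [triple_reorder (fun x y z => pr p (fun ω => (X ω, Y ω, Z ω)) (x, y, z)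
        * Real.log (∑ x' : α, ∑ y' : β, pr p (fun ω => (X ω, Y ω, Z ω)) (x', y', z)))]
    congr 1
    refine Finset.sum_congr rfl fun z _ => ?_
    rw [pr_m3 p X Y Z z, Finset.sum_mul]
    refine Finset.sum_congr rfl fun x _ => by rw [Finset.sum_mul]
  rw [e1, e2, e3, e4]
  rw [show ∀ F G H K : α → β → γ → ℝ, (∑ x : α, ∑ y : β, ∑ z : γ, (F x y z + G x y z - H x y z - K x y z))
      = (∑ x : α, ∑ y : β, ∑ z : γ, F x y z) + (∑ x : α, ∑ y : β, ∑ z : γ, G x y z)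
        - (∑ x : α, ∑ y : β, ∑ z : γ, H x y z) - (∑ x : α, ∑ y : β, ∑ z : γ, K x y z) from
    fun F G H K => by simp [Finset.sum_add_distrib, Finset.sum_sub_distrib]]
  ring

end Bridge

section Derived
variable {Ω : Type*} [Fintype Ω] {α β γ : Type*}
  [Fintype α] [DecidableEq α] [Fintype β] [DecidableEq β] [Fintype γ] [DecidableEq γ]
  (p : Ω → ℝ)

lemma ent_tri_ineq (hp : ∀ ω, 0 ≤ p ω) (X : Ω → α) (Y : Ω → β) (Z : Ω → γ) :
    ent p (fun ω => (X ω, Y ω, Z ω)) + ent p Z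
      ≤ ent p (fun ω => (X ω, Z ω)) + ent p (fun ω => (Y ω, Z ω)) := by
  have h := core_ineq (fun x y z => pr p (fun ω => (X ω, Y ω, Z ω)) (x, y, z))
    (fun x y z => pr_nonneg p hp _ _)
  have h2 := ent_combo p X Y Z
  linarith [h2 ▸ h]

lemma ent_tri_eq (hp : ∀ ω, 0 ≤ p ω) (X : Ω → α) (Y : Ω → β) (Z : Ω → γ)
    (hci : ∀ x y z, pr p (fun ω => (X ω, Y ω, Z ω)) (x, y, z)
        * (∑ x' : α, ∑ y' : β, pr p (fun ω => (X ω, Y ω, Z ω)) (x', y', z))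
      = (∑ y' : β, pr p (fun ω => (X ω, Y ω, Z ω)) (x, y', z))
        * (∑ x' : α, pr p (fun ω => (X ω, Y ω, Z ω)) (x', y, z))) :
    ent p (fun ω => (X ω, Y ω, Z ω)) + ent p Z
      = ent p (fun ω => (X ω, Z ω)) + ent p (fun ω => (Y ω, Z ω)) := by
  have h := core_eq (fun x y z => pr p (fun ω => (X ω, Y ω, Z ω)) (x, y, z))
    (fun x y z => pr_nonneg p hp _ _) hci
  have h2 := ent_combo p X Y Z
  rw [h] at h2
  linarith

lemma ent_pair_le_log [Nonempty β] (hp : IsPMF p) (Y : Ω → β) (Z : Ω → γ) :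
    ent p (fun ω => (Y ω, Z ω)) ≤ Real.log (Fintype.card β) + ent p Z := by
  obtain ⟨hp0, hp1⟩ := hp
  have hcard : (0:ℝ) < Fintype.card β := by
    have := Fintype.card_pos (α := β); exact_mod_cast this
  have key : ∀ y z, pr p (fun ω => (Y ω, Z ω)) (y, z) * Real.log (pr p Z z)
      - pr p (fun ω => (Y ω, Z ω)) (y, z) * Real.log (Fintype.card β)
      - pr p (fun ω => (Y ω, Z ω)) (y, z) * Real.log (pr p (fun ω => (Y ω, Z ω)) (y, z))
      ≤ pr p Z z / Fintype.card β - pr p (fun ω => (Y ω, Z ω)) (y, z) := by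
    intro y z
    set a := pr p (fun ω => (Y ω, Z ω)) (y, z) with ha
    have hann : 0 ≤ a := pr_nonneg p hp0 _ _
    rcases eq_or_lt_of_le hann with h0 | h0
    · rw [← h0]
      have : 0 ≤ pr p Z z := pr_nonneg p hp0 _ _
      simp
      positivity
    · have hZpos : 0 < pr p Z z := by
        rw [pr_snd' p Y Z z]
        exact lt_of_lt_of_le h0 (Finset.single_le_sum
          (f := fun y' => pr p (fun ω => (Y ω, Z ω)) (y', z))
          (fun y' _ => pr_nonneg p hp0 _ _) (Finset.mem_univ y))
      have := gibbs_pt (le_of_lt h0) (show (0:ℝ) ≤ pr p Z z / Fintype.card β by positivity)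
        (fun h => absurd h (by positivity))
      rw [Real.log_div (ne_of_gt hZpos) (ne_of_gt hcard)] at this
      nlinarith
  have total : ∑ y : β, ∑ z : γ,
      (pr p (fun ω => (Y ω, Z ω)) (y, z) * Real.log (pr p Z z)
        - pr p (fun ω => (Y ω, Z ω)) (y, z) * Real.log (Fintype.card β)
        - pr p (fun ω => (Y ω, Z ω)) (y, z) * Real.log (pr p (fun ω => (Y ω, Z ω)) (y, z)))
      ≤ ∑ y : β, ∑ z : γ, (pr p Z z / Fintype.card β - pr p (fun ω => (Y ω, Z ω)) (y, z)) :=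
    Finset.sum_le_sum fun y _ => Finset.sum_le_sum fun z _ => key y z
  have hE : ∑ y : β, ∑ z : γ, pr p (fun ω => (Y ω, Z ω)) (y, z) = 1 := by
    rw [Finset.sum_comm]
    rw [show (∑ z : γ, ∑ y : β, pr p (fun ω => (Y ω, Z ω)) (y, z)) = ∑ z : γ, pr p Z z from
      Finset.sum_congr rfl fun z _ => (pr_snd' p Y Z z).symm]
    rw [sum_pr, hp1]
  have hZ1 : ∑ z : γ, pr p Z z = 1 := by rw [sum_pr, hp1]
  have hD : ∑ y : β, ∑ z : γ, pr p Z z / (Fintype.card β : ℝ) = 1 := by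
    rw [show (∑ z : γ, pr p Z z / (Fintype.card β : ℝ)) = (∑ z : γ, pr p Z z) / Fintype.card β from
      (Finset.sum_div _ _ _).symm, hZ1, Finset.sum_const, Finset.card_univ, nsmul_eq_mul]
    field_simp
  have hA : ∑ y : β, ∑ z : γ, pr p (fun ω => (Y ω, Z ω)) (y, z) * Real.log (pr p Z z)
      = ∑ z : γ, pr p Z z * Real.log (pr p Z z) := by
    rw [Finset.sum_comm]
    refine Finset.sum_congr rfl fun z _ => ?_
    rw [← Finset.sum_mul, ← pr_snd' p Y Z z]
  have hC : ∑ y : β, ∑ z : γ, pr p (fun ω => (Y ω, Z ω)) (y, z)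
        * Real.log (pr p (fun ω => (Y ω, Z ω)) (y, z)) = -ent p (fun ω => (Y ω, Z ω)) := by
    unfold ent
    rw [Fintype.sum_prod_type, neg_neg]
  have hB : ∑ y : β, ∑ z : γ, pr p (fun ω => (Y ω, Z ω)) (y, z) * Real.log (Fintype.card β)
      = Real.log (Fintype.card β) := by
    rw [show (∑ y : β, ∑ z : γ, pr p (fun ω => (Y ω, Z ω)) (y, z) * Real.log (Fintype.card β))
      = (∑ y : β, ∑ z : γ, pr p (fun ω => (Y ω, Z ω)) (y, z)) * Real.log (Fintype.card β) from by
        rw [Finset.sum_mul]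
        exact Finset.sum_congr rfl fun y _ => by rw [Finset.sum_mul], hE, one_mul]
  have hsplit : ∑ y : β, ∑ z : γ,
      (pr p (fun ω => (Y ω, Z ω)) (y, z) * Real.log (pr p Z z)
        - pr p (fun ω => (Y ω, Z ω)) (y, z) * Real.log (Fintype.card β)
        - pr p (fun ω => (Y ω, Z ω)) (y, z) * Real.log (pr p (fun ω => (Y ω, Z ω)) (y, z)))
      = (∑ y : β, ∑ z : γ, pr p (fun ω => (Y ω, Z ω)) (y, z) * Real.log (pr p Z z))
        - (∑ y : β, ∑ z : γ, pr p (fun ω => (Y ω, Z ω)) (y, z) * Real.log (Fintype.card β))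
        - (∑ y : β, ∑ z : γ, pr p (fun ω => (Y ω, Z ω)) (y, z)
            * Real.log (pr p (fun ω => (Y ω, Z ω)) (y, z))) := by
    simp [Finset.sum_sub_distrib]
  have hsplit2 : ∑ y : β, ∑ z : γ, (pr p Z z / (Fintype.card β : ℝ)
      - pr p (fun ω => (Y ω, Z ω)) (y, z))
      = (∑ y : β, ∑ z : γ, pr p Z z / (Fintype.card β : ℝ))
        - ∑ y : β, ∑ z : γ, pr p (fun ω => (Y ω, Z ω)) (y, z) := by
    simp [Finset.sum_sub_distrib]
  rw [hsplit, hsplit2, hA, hB, hC, hD, hE] at total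
  have hentZ : ent p Z = -∑ z : γ, pr p Z z * Real.log (pr p Z z) := rfl
  linarith

lemma ent_indep (hp : IsPMF p) (X : Ω → α) (Z : Ω → γ)
    (h : ∀ x z, pr p (fun ω => (X ω, Z ω)) (x, z) = pr p X x * pr p Z z) :
    ent p (fun ω => (X ω, Z ω)) = ent p X + ent p Z := by
  obtain ⟨hp0, hp1⟩ := hp
  have hX1 : ∑ x : α, pr p X x = 1 := by rw [sum_pr, hp1]
  have hZ1 : ∑ z : γ, pr p Z z = 1 := by rw [sum_pr, hp1]
  have hterm : ∀ x z, pr p (fun ω => (X ω, Z ω)) (x, z)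
        * Real.log (pr p (fun ω => (X ω, Z ω)) (x, z))
      = pr p X x * pr p Z z * Real.log (pr p X x)
        + pr p X x * pr p Z z * Real.log (pr p Z z) := by
    intro x z
    rw [h x z]
    by_cases hx : pr p X x = 0
    · simp [hx]
    · by_cases hz : pr p Z z = 0
      · simp [hz]
      · rw [Real.log_mul hx hz]; ring
  unfold ent
  rw [Fintype.sum_prod_type]
  simp only [hterm]
  rw [show (∑ x : α, ∑ z : γ, (pr p X x * pr p Z z * Real.log (pr p X x)
      + pr p X x * pr p Z z * Real.log (pr p Z z)))
    = (∑ x : α, ∑ z : γ, pr p X x * pr p Z z * Real.log (pr p X x))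
      + ∑ x : α, ∑ z : γ, pr p X x * pr p Z z * Real.log (pr p Z z) from by
    simp [Finset.sum_add_distrib]]
  have e1 : ∑ x : α, ∑ z : γ, pr p X x * pr p Z z * Real.log (pr p X x)
      = ∑ x : α, pr p X x * Real.log (pr p X x) := by
    refine Finset.sum_congr rfl fun x _ => ?_
    calc ∑ z : γ, pr p X x * pr p Z z * Real.log (pr p X x)
        = ∑ z : γ, (pr p X x * Real.log (pr p X x)) * pr p Z z :=
          Finset.sum_congr rfl fun z _ => by ring
      _ = (pr p X x * Real.log (pr p X x)) * ∑ z : γ, pr p Z z := (Finset.mul_sum _ _ _).symm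
      _ = pr p X x * Real.log (pr p X x) := by rw [hZ1, mul_one]
  have e2 : ∑ x : α, ∑ z : γ, pr p X x * pr p Z z * Real.log (pr p Z z)
      = ∑ z : γ, pr p Z z * Real.log (pr p Z z) := by
    rw [Finset.sum_comm]
    refine Finset.sum_congr rfl fun z _ => ?_
    calc ∑ x : α, pr p X x * pr p Z z * Real.log (pr p Z z)
        = ∑ x : α, (pr p Z z * Real.log (pr p Z z)) * pr p X x :=
          Finset.sum_congr rfl fun x _ => by ring
      _ = (pr p Z z * Real.log (pr p Z z)) * ∑ x : α, pr p X x := (Finset.mul_sum _ _ _).symm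
      _ = pr p Z z * Real.log (pr p Z z) := by rw [hX1, mul_one]
  rw [e1, e2]
  ring

end Derived

lemma sum_ite_const {ι : Type*} [Fintype ι] (c : Prop) [Decidable c] (f : ι → ℝ) :
    ∑ i : ι, (if c then f i else 0) = if c then ∑ i : ι, f i else 0 := by
  split_ifs <;> simp

end AuxLemmas

/-- If the joint law of `(V,S,U,X,Y)` factorizes as
`Q_V(v) Q_S(s) Q_{U|S,V}(u|s,v) Q_{X|U,V}(x|u,v) Q_{Y|X,S}(y|x,s)` where the channel
`Q_{Y|X,S}` is the deterministic mod-`A` adder `Y = X ⊕ S`, then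
`I(U;Y|V) − I(U;S|V) ≤ log A − H(S)`. -/
theorem stmt5 {Ω : Type*} [Fintype Ω] {A : ℕ} [NeZero A] {𝓥 𝓤 : Type*}
    [Fintype 𝓥] [DecidableEq 𝓥] [Fintype 𝓤] [DecidableEq 𝓤]
    (p : Ω → ℝ) (hp : IsPMF p)
    (V : Ω → 𝓥) (S : Ω → ZMod A) (U : Ω → 𝓤) (X : Ω → ZMod A) (Y : Ω → ZMod A)
    (QV : 𝓥 → ℝ) (QS : ZMod A → ℝ)
    (QUSV : 𝓤 → ZMod A → 𝓥 → ℝ) (QXUV : ZMod A → 𝓤 → 𝓥 → ℝ)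
    (hQVpos : ∀ v, 0 ≤ QV v) (hQV1 : ∑ v : 𝓥, QV v = 1)
    (hQSpos : ∀ s, 0 ≤ QS s) (hQS1 : ∑ s : ZMod A, QS s = 1)
    (hQUSVpos : ∀ u s v, 0 ≤ QUSV u s v) (hQUSV1 : ∀ s v, ∑ u : 𝓤, QUSV u s v = 1)
    (hQXUVpos : ∀ x u v, 0 ≤ QXUV x u v) (hQXUV1 : ∀ u v, ∑ x : ZMod A, QXUV x u v = 1)
    (hfact : ∀ (v : 𝓥) (s : ZMod A) (u : 𝓤) (x y : ZMod A),
      pr p (fun ω => (V ω, S ω, U ω, X ω, Y ω)) (v, s, u, x, y)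
        = QV v * QS s * QUSV u s v * QXUV x u v * (if y = x + s then 1 else 0)) :
    cmi p U Y V - cmi p U S V ≤ Real.log A - ent p S := by
  obtain ⟨hp0, hp1⟩ := hp
  -- a.s. identity Y = X + S
  have hae : ∀ ω, p ω ≠ 0 → Y ω = X ω + S ω := by
    intro ω hω
    by_contra hne
    have h1 := hfact (V ω) (S ω) (U ω) (X ω) (Y ω)
    rw [if_neg hne, mul_zero] at h1
    have h2 : p ω ≤ pr p (fun ω' => (V ω', S ω', U ω', X ω', Y ω')) (V ω, S ω, U ω, X ω, Y ω) :=
      pr_ge p hp0 _ ω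
    have h3 : 0 < p ω := lt_of_le_of_ne (hp0 ω) (Ne.symm hω)
    rw [h1] at h2
    linarith
  -- marginals
  have HS : ∀ s, pr p S s = QS s := by
    intro s
    have h0 : pr p S s
        = ∑ t : 𝓥 × ZMod A × 𝓤 × ZMod A × ZMod A,
          if t.2.1 = s then pr p (fun ω => (V ω, S ω, U ω, X ω, Y ω)) t else 0 :=
      pr_comp p (fun ω => (V ω, S ω, U ω, X ω, Y ω)) (fun t => t.2.1) s
    rw [h0]
    simp only [Fintype.sum_prod_type]
    simp only [hfact, mul_ite, mul_one, mul_zero]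
    simp only [sum_ite_const, Finset.sum_ite_eq', Finset.mem_univ, if_true]
    have c1 : ∀ v' u', ∑ x' : ZMod A, QV v' * QS s * QUSV u' s v' * QXUV x' u' v'
        = QV v' * QS s * QUSV u' s v' := by
      intro v' u'; rw [← Finset.mul_sum, hQXUV1, mul_one]
    have c2 : ∀ v', ∑ u' : 𝓤, QV v' * QS s * QUSV u' s v' = QV v' * QS s := by
      intro v'
      rw [show (∑ u' : 𝓤, QV v' * QS s * QUSV u' s v')
          = (QV v' * QS s) * ∑ u' : 𝓤, QUSV u' s v' from by rw [Finset.mul_sum], hQUSV1, mul_one]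
    calc ∑ v' : 𝓥, ∑ u' : 𝓤, ∑ x' : ZMod A, QV v' * QS s * QUSV u' s v' * QXUV x' u' v'
        = ∑ v' : 𝓥, ∑ u' : 𝓤, QV v' * QS s * QUSV u' s v' :=
          Finset.sum_congr rfl fun v' _ => Finset.sum_congr rfl fun u' _ => c1 v' u'
      _ = ∑ v' : 𝓥, QV v' * QS s := Finset.sum_congr rfl fun v' _ => c2 v'
      _ = QS s := by rw [← Finset.sum_mul, hQV1, one_mul]
  have HV : ∀ v, pr p V v = QV v := by
    intro v
    have h0 : pr p V v
        = ∑ t : 𝓥 × ZMod A × 𝓤 × ZMod A × ZMod A,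
          if t.1 = v then pr p (fun ω => (V ω, S ω, U ω, X ω, Y ω)) t else 0 :=
      pr_comp p (fun ω => (V ω, S ω, U ω, X ω, Y ω)) (fun t => t.1) v
    rw [h0]
    simp only [Fintype.sum_prod_type]
    simp only [hfact, mul_ite, mul_one, mul_zero]
    simp only [sum_ite_const, Finset.sum_ite_eq', Finset.mem_univ, if_true]
    have c1 : ∀ s' u', ∑ x' : ZMod A, QV v * QS s' * QUSV u' s' v * QXUV x' u' v
        = QV v * QS s' * QUSV u' s' v := by
      intro s' u'; rw [← Finset.mul_sum, hQXUV1, mul_one]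
    have c2 : ∀ s', ∑ u' : 𝓤, QV v * QS s' * QUSV u' s' v = QV v * QS s' := by
      intro s'
      rw [show (∑ u' : 𝓤, QV v * QS s' * QUSV u' s' v)
          = (QV v * QS s') * ∑ u' : 𝓤, QUSV u' s' v from by rw [Finset.mul_sum], hQUSV1, mul_one]
    calc ∑ s' : ZMod A, ∑ u' : 𝓤, ∑ x' : ZMod A, QV v * QS s' * QUSV u' s' v * QXUV x' u' v
        = ∑ s' : ZMod A, ∑ u' : 𝓤, QV v * QS s' * QUSV u' s' v :=
          Finset.sum_congr rfl fun s' _ => Finset.sum_congr rfl fun u' _ => c1 s' u'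
      _ = ∑ s' : ZMod A, QV v * QS s' := Finset.sum_congr rfl fun s' _ => c2 s'
      _ = QV v := by rw [← Finset.mul_sum, hQS1, mul_one]
  have HSV : ∀ s v, pr p (fun ω => (S ω, V ω)) (s, v) = QS s * QV v := by
    intro s v
    have h0 : pr p (fun ω => (S ω, V ω)) (s, v)
        = ∑ t : 𝓥 × ZMod A × 𝓤 × ZMod A × ZMod A,
          if (t.2.1, t.1) = (s, v) then pr p (fun ω => (V ω, S ω, U ω, X ω, Y ω)) t else 0 :=
      pr_comp p (fun ω => (V ω, S ω, U ω, X ω, Y ω)) (fun t => (t.2.1, t.1)) (s, v)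
    rw [h0]
    simp only [Fintype.sum_prod_type]
    simp only [hfact, mul_ite, mul_one, mul_zero]
    simp only [Prod.mk.injEq, ite_and]
    simp only [sum_ite_const, Finset.sum_ite_eq', Finset.mem_univ, if_true]
    have c1 : ∀ u', ∑ x' : ZMod A, QV v * QS s * QUSV u' s v * QXUV x' u' v
        = QV v * QS s * QUSV u' s v := by
      intro u'; rw [← Finset.mul_sum, hQXUV1, mul_one]
    calc ∑ u' : 𝓤, ∑ x' : ZMod A, QV v * QS s * QUSV u' s v * QXUV x' u' v
        = ∑ u' : 𝓤, QV v * QS s * QUSV u' s v := Finset.sum_congr rfl fun u' _ => c1 u'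
      _ = QV v * QS s := by
          rw [show (∑ u' : 𝓤, QV v * QS s * QUSV u' s v)
            = (QV v * QS s) * ∑ u' : 𝓤, QUSV u' s v from by rw [Finset.mul_sum], hQUSV1, mul_one]
      _ = QS s * QV v := mul_comm _ _
  have HJ : ∀ (s x : ZMod A) (u : 𝓤) (v : 𝓥),
      pr p (fun ω => (S ω, X ω, U ω, V ω)) (s, x, u, v)
        = QV v * QS s * QUSV u s v * QXUV x u v := by
    intro s x u v
    have h0 : pr p (fun ω => (S ω, X ω, U ω, V ω)) (s, x, u, v)
        = ∑ t : 𝓥 × ZMod A × 𝓤 × ZMod A × ZMod A,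
          if (t.2.1, t.2.2.2.1, t.2.2.1, t.1) = (s, x, u, v) then
            pr p (fun ω => (V ω, S ω, U ω, X ω, Y ω)) t else 0 :=
      pr_comp p (fun ω => (V ω, S ω, U ω, X ω, Y ω))
        (fun t => (t.2.1, t.2.2.2.1, t.2.2.1, t.1)) (s, x, u, v)
    rw [h0]
    simp only [Fintype.sum_prod_type]
    simp only [hfact]
    simp [Prod.mk.injEq, ite_and, mul_ite, mul_one, mul_zero, Finset.sum_ite_eq,
      Finset.sum_ite_eq']
  -- independence of S and V
  have eSV : ent p (fun ω => (S ω, V ω)) = ent p S + ent p V :=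
    ent_indep p ⟨hp0, hp1⟩ S V (fun s v => by rw [HSV, HS, HV])
  -- conditional bound for Y given V
  have eYV : ent p (fun ω => (Y ω, V ω)) ≤ Real.log A + ent p V := by
    have := ent_pair_le_log p ⟨hp0, hp1⟩ Y V
    rwa [ZMod.card] at this
  -- conditional independence of S and X given (U,V)
  have hci : ∀ (s x : ZMod A) (w : 𝓤 × 𝓥),
      pr p (fun ω => (S ω, X ω, U ω, V ω)) (s, x, w)
          * (∑ s' : ZMod A, ∑ x' : ZMod A, pr p (fun ω => (S ω, X ω, U ω, V ω)) (s', x', w))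
        = (∑ x' : ZMod A, pr p (fun ω => (S ω, X ω, U ω, V ω)) (s, x', w))
          * (∑ s' : ZMod A, pr p (fun ω => (S ω, X ω, U ω, V ω)) (s', x, w)) := by
    rintro s x ⟨u, v⟩
    simp only [HJ]
    have c1 : ∀ s', ∑ x' : ZMod A, QV v * QS s' * QUSV u s' v * QXUV x' u v
        = QV v * QS s' * QUSV u s' v := by
      intro s'; rw [← Finset.mul_sum, hQXUV1, mul_one]
    rw [c1 s, Finset.sum_congr rfl (fun s' _ => c1 s'), ← Finset.sum_mul]
    ring
  have ci : ent p (fun ω => (S ω, X ω, U ω, V ω)) + ent p (fun ω => (U ω, V ω))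
      = ent p (fun ω => (S ω, U ω, V ω)) + ent p (fun ω => (X ω, U ω, V ω)) :=
    ent_tri_eq p hp0 S X (fun ω => (U ω, V ω)) (fun s x w => hci s x w)
  -- bijection step
  have hbij : ent p (fun ω => (Y ω, X ω, U ω, V ω)) = ent p (fun ω => (S ω, X ω, U ω, V ω)) := by
    have h1 : ent p (fun ω => (Y ω, X ω, U ω, V ω))
        = ent p (fun ω => (X ω + S ω, X ω, U ω, V ω)) :=
      ent_congr_ae p (fun ω hω => by rw [hae ω hω])
    have hinj : Function.Injective
        (fun t : ZMod A × ZMod A × 𝓤 × 𝓥 => (t.2.1 + t.1, t.2.1, t.2.2)) := by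
      rintro ⟨a1, a2, a3⟩ ⟨b1, b2, b3⟩ h
      simp only [Prod.mk.injEq] at h
      obtain ⟨h1, h2, h3⟩ := h
      rw [h2] at h1
      have : a1 = b1 := add_left_cancel h1
      simp [this, h2, h3]
    have h2 : ent p (fun ω => (X ω + S ω, X ω, U ω, V ω))
        = ent p (fun ω => (S ω, X ω, U ω, V ω)) :=
      ent_comp_inj p hinj (fun ω => (S ω, X ω, U ω, V ω))
    rw [h1, h2]
  -- submodularity step
  have tri : ent p (fun ω => (Y ω, X ω, U ω, V ω)) + ent p (fun ω => (U ω, V ω))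
      ≤ ent p (fun ω => (Y ω, U ω, V ω)) + ent p (fun ω => (X ω, U ω, V ω)) :=
    ent_tri_ineq p hp0 Y X (fun ω => (U ω, V ω))
  have key3 : ent p (fun ω => (S ω, U ω, V ω)) ≤ ent p (fun ω => (Y ω, U ω, V ω)) := by
    rw [hbij] at tri
    linarith
  -- shape conversions
  have cUY : ent p (fun ω => ((U ω, Y ω), V ω)) = ent p (fun ω => (Y ω, U ω, V ω)) := by
    have hinj : Function.Injective
        (fun t : (𝓤 × ZMod A) × 𝓥 => (t.1.2, t.1.1, t.2)) := by
      rintro ⟨⟨a1, a2⟩, a3⟩ ⟨⟨b1, b2⟩, b3⟩ h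
      simp only [Prod.mk.injEq] at h
      simp [Prod.ext_iff, h.1, h.2.1, h.2.2]
    exact (ent_comp_inj p hinj (fun ω => ((U ω, Y ω), V ω))).symm
  have cUS : ent p (fun ω => ((U ω, S ω), V ω)) = ent p (fun ω => (S ω, U ω, V ω)) := by
    have hinj : Function.Injective
        (fun t : (𝓤 × ZMod A) × 𝓥 => (t.1.2, t.1.1, t.2)) := by
      rintro ⟨⟨a1, a2⟩, a3⟩ ⟨⟨b1, b2⟩, b3⟩ h
      simp only [Prod.mk.injEq] at h
      simp [Prod.ext_iff, h.1, h.2.1, h.2.2]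
    exact (ent_comp_inj p hinj (fun ω => ((U ω, S ω), V ω))).symm
  unfold cmi cent
  rw [cUY, cUS, eSV]
  linarith
end

section
/- Let g : ℝ≥0 → ℝ be any function, V a finite set, Q_V a probability distribution on V, and (R_v)_{v∈V} nonnegative reals with ∑_v Q_V(v) R_v = R. Then there exist a set V' with |V'| ≤ 3, a probability distribution Q' on V', and (R'_v)_{v∈V'} with ∑ Q'(v) R'_v = R and ∑_v Q'(v) g(R'_v) ≥ ∑_v Q_V(v) g(R_v). -/
open Finset

private lemma pad_sum {ι : Type*} [Fintype ι] (f : ι ↪ Fin 3) (F : ι → ℝ) :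
    ∑ i : Fin 3, (if h : ∃ j, f j = i then F h.choose else 0) = ∑ j : ι, F j := by
  classical
  have h0 : ∀ i ∈ (Finset.univ : Finset (Fin 3)), i ∉ Finset.univ.image f →
      (if h : ∃ j, f j = i then F h.choose else 0) = 0 := by
    intro i _ hi
    rw [dif_neg]
    rintro ⟨j, rfl⟩
    exact hi (Finset.mem_image_of_mem f (Finset.mem_univ j))
  calc ∑ i : Fin 3, (if h : ∃ j, f j = i then F h.choose else 0)
      = ∑ i ∈ Finset.univ.image f, (if h : ∃ j, f j = i then F h.choose else 0) :=
        (Finset.sum_subset (Finset.subset_univ _) h0).symm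
    _ = ∑ j : ι, (if h : ∃ j', f j' = f j then F h.choose else 0) :=
        Finset.sum_image (fun x _ y _ h => f.injective h)
    _ = ∑ j : ι, F j := by
        refine Finset.sum_congr rfl fun j _ => ?_
        have h : ∃ j', f j' = f j := ⟨j, rfl⟩
        rw [dif_pos h]
        congr 1
        exact f.injective h.choose_spec

/-- Cardinality reduction of the time-sharing variable to at most 3 values.
For any `g : ℝ≥0 → ℝ`, any finite `V`, probability distribution `Q_V` on `V`, and
nonnegative rates `(R_v)` with `∑ Q_V(v) R_v = R`, there is a distribution on at most three
points achieving the same rate constraint and an objective at least as large. -/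
theorem stmt6 {V : Type*} [Fintype V] (g : NNReal → ℝ)
    (QV : V → ℝ) (hQVpos : ∀ v, 0 ≤ QV v) (hQV1 : ∑ v : V, QV v = 1)
    (Rv : V → NNReal) (R : ℝ) (hR : ∑ v : V, QV v * (Rv v : ℝ) = R) :
    ∃ (Q' : Fin 3 → ℝ) (R' : Fin 3 → NNReal),
      (∀ i, 0 ≤ Q' i) ∧ (∑ i : Fin 3, Q' i = 1) ∧
      (∑ i : Fin 3, Q' i * (R' i : ℝ) = R) ∧
      (∑ v : V, QV v * g (Rv v)) ≤ ∑ i : Fin 3, Q' i * g (R' i) := by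
  classical
  set p : V → ℝ × ℝ := fun v => ((Rv v : ℝ), g (Rv v)) with hp
  set x : ℝ × ℝ := (R, ∑ v : V, QV v * g (Rv v)) with hxdef
  have hx : x ∈ convexHull ℝ (Set.range p) := by
    have hmem : Finset.univ.centerMass QV p ∈ convexHull ℝ (Set.range p) :=
      Finset.centerMass_mem_convexHull _ (fun v _ => hQVpos v) (by rw [hQV1]; norm_num)
        (fun v _ => Set.mem_range_self v)
    have heq : Finset.univ.centerMass QV p = x := by
      rw [Finset.centerMass_eq_of_sum_1 _ _ hQV1]
      ext
      · simp only [Prod.fst_sum, hxdef]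
        rw [← hR]
        exact Finset.sum_congr rfl fun v _ => by simp [hp, Prod.smul_def, smul_eq_mul]
      · simp only [Prod.snd_sum, hxdef]
        exact Finset.sum_congr rfl fun v _ => by simp [hp, Prod.smul_def, smul_eq_mul]
    rwa [heq] at hmem
  obtain ⟨ι, hfin, z, w, hrange, hai, hwpos, hw1, hwx⟩ :=
    eq_pos_convex_span_of_mem_convexHull hx
  have hcard : Fintype.card ι ≤ 3 := by
    have h1 := hai.card_le_finrank_succ
    have h2 : Module.finrank ℝ (vectorSpan ℝ (Set.range z)) ≤ Module.finrank ℝ (ℝ × ℝ) :=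
      Submodule.finrank_le _
    have h3 : Module.finrank ℝ (ℝ × ℝ) = 2 := by
      simp [Module.finrank_prod]
    omega
  obtain ⟨f⟩ : Nonempty (ι ↪ Fin 3) :=
    Function.Embedding.nonempty_of_card_le (by simpa using hcard)
  -- facts about points z j
  have hz1 : ∀ j : ι, 0 ≤ (z j).1 ∧ g ((z j).1.toNNReal) = (z j).2 := by
    intro j
    obtain ⟨v, hv⟩ := hrange (Set.mem_range_self j)
    constructor
    · rw [← hv]; exact (Rv v).coe_nonneg
    · rw [← hv]; simp [hp]
  have hfst : ∑ j : ι, w j * (z j).1 = R := by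
    have := congrArg Prod.fst hwx
    simpa [Prod.fst_sum, Prod.smul_def, smul_eq_mul, hxdef] using this
  have hsnd : ∑ j : ι, w j * (z j).2 = ∑ v : V, QV v * g (Rv v) := by
    have := congrArg Prod.snd hwx
    simpa [Prod.snd_sum, Prod.smul_def, smul_eq_mul, hxdef] using this
  refine ⟨fun i => if h : ∃ j, f j = i then w h.choose else 0,
    fun i => if h : ∃ j, f j = i then ((z h.choose).1).toNNReal else 0, ?_, ?_, ?_, ?_⟩
  · intro i
    dsimp only
    by_cases h : ∃ j, f j = i
    · simp only [dif_pos h]; exact (hwpos _).le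
    · simp only [dif_neg h]; exact le_refl 0
  · rw [pad_sum f w, hw1]
  · have : ∀ i : Fin 3,
        (if h : ∃ j, f j = i then w h.choose else 0) *
          (((if h : ∃ j, f j = i then ((z h.choose).1).toNNReal else 0) : NNReal) : ℝ) =
        (if h : ∃ j, f j = i then w h.choose * (z h.choose).1 else 0) := by
      intro i
      by_cases h : ∃ j, f j = i
      · simp only [dif_pos h, Real.coe_toNNReal _ (hz1 _).1]
      · simp only [dif_neg h]; simp
    rw [Finset.sum_congr rfl fun i _ => this i, pad_sum f (fun j => w j * (z j).1), hfst]
  · have : ∀ i : Fin 3,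
        (if h : ∃ j, f j = i then w h.choose else 0) *
          g (if h : ∃ j, f j = i then ((z h.choose).1).toNNReal else 0) =
        (if h : ∃ j, f j = i then w h.choose * (z h.choose).2 else 0) := by
      intro i
      by_cases h : ∃ j, f j = i
      · simp only [dif_pos h, (hz1 _).2]
      · simp only [dif_neg h]; simp
    rw [Finset.sum_congr rfl fun i _ => this i, pad_sum f (fun j => w j * (z j).2), hsnd]
end
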